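/- For every n ≥ 1, the group of symmetries of the regular hyperoctahedron ◇^n (all surjective isometries φ of Euclidean ℝ^n with φ(◇^n) = ◇^n, under composition) is isomorphic as a group to the automorphism group of the graph of ◇^n, namely the simple graph on the 2n vertices {±e_1,…,±e_n} in which two distinct vertices v, v' are adjacent if and only if v' ≠ −v. -/

import Mathlib

/-- The vertex set `{±e₁,…,±eₙ}` of the regular hyperoctahedron in `ℝⁿ`. -/
def octVerts (n : ℕ) : Set (EuclideanSpace ℝ (Fin n)) :=
  (Set.range fun i => EuclideanSpace.single i (1 : ℝ)) ∪
    (Set.range fun i => -EuclideanSpace.single i (1 : ℝ))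

/-- The graph of the regular hyperoctahedron: vertices `{±e₁,…,±eₙ}`, two distinct
vertices `v, v'` being adjacent iff `v' ≠ -v`. -/
def octGraph (n : ℕ) : SimpleGraph (octVerts n) where
  Adj v w := v.1 ≠ w.1 ∧ w.1 ≠ -v.1
  symm := by
    constructor
    rintro v w ⟨h1, h2⟩
    exact ⟨fun h => h1 h.symm, fun h => h2 (by rw [h, neg_neg])⟩
  loopless := by constructor; rintro v ⟨h1, _⟩; exact h1 rfl

/-- The group of symmetries of `A ⊆ ℝⁿ`: all (bijective) isometries of Euclidean
`ℝⁿ` mapping `A` onto `A`, as a subgroup of the isometry group of `ℝⁿ`. -/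
noncomputable def symGroup (n : ℕ) (A : Set (EuclideanSpace ℝ (Fin n))) :
    Subgroup (EuclideanSpace ℝ (Fin n) ≃ᵢ EuclideanSpace ℝ (Fin n)) where
  carrier := {φ | φ '' A = A}
  one_mem' := by simp
  mul_mem' := by
    intro a b ha hb
    show ⇑(a * b) '' A = A
    rw [show ⇑(a * b) = ⇑a ∘ ⇑b from rfl, Set.image_comp]
    rw [Set.mem_setOf_eq] at ha hb
    rw [hb, ha]
  inv_mem' := by
    intro a ha
    rw [Set.mem_setOf_eq] at ha ⊢
    conv_lhs => rw [← ha, ← Set.image_comp]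
    simp
/-- The automorphism group of a simple graph: all permutations of the vertex set
preserving adjacency and nonadjacency, as a subgroup of the permutation group. -/
def autGroup {V : Type*} (G : SimpleGraph V) : Subgroup (Equiv.Perm V) where
  carrier := {π | ∀ v w, G.Adj (π v) (π w) ↔ G.Adj v w}
  one_mem' := by intro v w; rfl
  mul_mem' := by
    intro a b ha hb v w
    simpa [Equiv.Perm.mul_apply] using (ha (b v) (b w)).trans (hb v w)
  inv_mem' := by
    intro a ha v w
    simpa using (ha (a⁻¹ v) (a⁻¹ w)).symm

namespace OctAux

open EuclideanSpace Finset RealInnerProductSpace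

variable {n : ℕ}

lemma mem_octVerts_iff {x : EuclideanSpace ℝ (Fin n)} :
    x ∈ octVerts n ↔ ∃ (i : Fin n) (c : ℝ), (c = 1 ∨ c = -1) ∧
      x = c • EuclideanSpace.single i 1 := by
  constructor
  · rintro (⟨i, rfl⟩ | ⟨i, rfl⟩)
    · exact ⟨i, 1, Or.inl rfl, (one_smul _ _).symm⟩
    · exact ⟨i, -1, Or.inr rfl, by simp⟩
  · rintro ⟨i, c, (rfl | rfl), rfl⟩
    · exact Or.inl ⟨i, (one_smul _ _).symm⟩
    · exact Or.inr ⟨i, by simp⟩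

lemma base_mem (i : Fin n) : EuclideanSpace.single i (1 : ℝ) ∈ octVerts n :=
  Or.inl ⟨i, rfl⟩

lemma neg_mem {x : EuclideanSpace ℝ (Fin n)} (hx : x ∈ octVerts n) :
    -x ∈ octVerts n := by
  rcases hx with ⟨i, rfl⟩ | ⟨i, rfl⟩
  · exact Or.inr ⟨i, rfl⟩
  · exact Or.inl ⟨i, by simp⟩

lemma norm_of_mem {x : EuclideanSpace ℝ (Fin n)} (hx : x ∈ octVerts n) : ‖x‖ = 1 := by
  obtain ⟨i, c, hc, rfl⟩ := mem_octVerts_iff.mp hx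
  rcases hc with rfl | rfl <;> simp [norm_smul]

lemma sum_abs_le {x : EuclideanSpace ℝ (Fin n)}
    (hx : x ∈ convexHull ℝ (octVerts n)) : ∑ i, |x i| ≤ 1 := by
  have hconv : Convex ℝ {y : EuclideanSpace ℝ (Fin n) | ∑ i, |y i| ≤ 1} := by
    intro a ha b hb s t hs ht hst
    simp only [Set.mem_setOf_eq] at ha hb ⊢
    calc ∑ i, |(s • a + t • b) i| ≤ ∑ i, (s * |a i| + t * |b i|) := by
          refine Finset.sum_le_sum fun i _ => ?_
          have : (s • a + t • b) i = s * a i + t * b i := rfl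
          rw [this]
          calc |s * a i + t * b i| ≤ |s * a i| + |t * b i| := abs_add_le _ _
            _ = s * |a i| + t * |b i| := by
                rw [abs_mul, abs_mul, abs_of_nonneg hs, abs_of_nonneg ht]
      _ = s * ∑ i, |a i| + t * ∑ i, |b i| := by
          rw [Finset.sum_add_distrib, Finset.mul_sum, Finset.mul_sum]
      _ ≤ s * 1 + t * 1 := by
          gcongr
      _ = 1 := by rw [mul_one, mul_one, hst]
  refine convexHull_min ?_ hconv hx
  intro y hy
  obtain ⟨i, c, hc, rfl⟩ := mem_octVerts_iff.mp hy
  have : ∀ j, |(c • EuclideanSpace.single i (1:ℝ)) j| = if j = i then 1 else 0 := by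
    intro j
    have : (c • EuclideanSpace.single i (1:ℝ)) j = c * (EuclideanSpace.single i (1:ℝ)) j := rfl
    rcases hc with rfl | rfl <;> simp [this, EuclideanSpace.single_apply] <;>
      split <;> simp
  simp only [Set.mem_setOf_eq, this]
  simp

lemma norm_sq_eq (x : EuclideanSpace ℝ (Fin n)) : ‖x‖ ^ 2 = ∑ i, (x i) ^ 2 := by
  rw [EuclideanSpace.norm_eq, Real.sq_sqrt (by positivity)]
  simp [sq_abs]

lemma norm_le_of_hull {x : EuclideanSpace ℝ (Fin n)}
    (hx : x ∈ convexHull ℝ (octVerts n)) : ‖x‖ ≤ 1 := by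
  have : convexHull ℝ (octVerts n) ⊆ Metric.closedBall 0 1 := by
    refine convexHull_min ?_ (convex_closedBall 0 1)
    intro y hy
    rw [Metric.mem_closedBall, dist_zero_right, norm_of_mem hy]
  simpa [dist_zero_right] using this hx

lemma eq_single_of {x : EuclideanSpace ℝ (Fin n)}
    (h1 : ∑ i, |x i| ≤ 1) (h2 : ‖x‖ = 1) : x ∈ octVerts n := by
  have hsq : ∑ i, (x i) ^ 2 = 1 := by rw [← norm_sq_eq, h2]; norm_num
  set S := ∑ i, |x i| with hS
  have hS0 : (0:ℝ) ≤ S := Finset.sum_nonneg fun i _ => abs_nonneg _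
  have habsle : ∀ i : Fin n, |x i| ≤ S :=
    fun i => Finset.single_le_sum (fun j _ => abs_nonneg (x j)) (Finset.mem_univ i)
  have key : ∑ i, (x i) ^ 2 ≤ ∑ i, |x i| * S := by
    refine Finset.sum_le_sum fun i _ => ?_
    calc (x i) ^ 2 = |x i| * |x i| := by rw [← sq_abs]; ring
      _ ≤ |x i| * S := mul_le_mul_of_nonneg_left (habsle i) (abs_nonneg _)
  have hsum : ∑ i, |x i| * S = S * S := by rw [← Finset.sum_mul]
  have hSS : S * S ≤ 1 := by nlinarith
  have hS1 : S = 1 := by nlinarith [key, hsum, hsq]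
  -- equality in the termwise comparison
  have heq : ∀ i ∈ Finset.univ, (x i) ^ 2 = |x i| * S := by
    refine (Finset.sum_eq_sum_iff_of_le ?_).mp ?_
    · intro i _
      calc (x i) ^ 2 = |x i| * |x i| := by rw [← sq_abs]; ring
        _ ≤ |x i| * S := mul_le_mul_of_nonneg_left (habsle i) (abs_nonneg _)
    · rw [hsum, hS1, hsq]; ring
  have hzo : ∀ i : Fin n, |x i| = 0 ∨ |x i| = 1 := by
    intro i
    have hi := heq i (Finset.mem_univ i)
    rw [hS1, mul_one] at hi
    have h' : |x i| * (1 - |x i|) = 0 := by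
      have hsq' : (x i) ^ 2 = |x i| * |x i| := by rw [← sq_abs]; ring
      nlinarith [hi, hsq']
    rcases mul_eq_zero.mp h' with h | h
    · exact Or.inl h
    · exact Or.inr (by linarith)
  obtain ⟨j, hj⟩ : ∃ j : Fin n, |x j| = 1 := by
    by_contra hcon
    push_neg at hcon
    have : ∀ i : Fin n, |x i| = 0 := by
      intro i
      rcases hzo i with h | h
      · exact h
      · exact absurd h (hcon i)
    have : S = 0 := Finset.sum_eq_zero fun i _ => this i
    rw [hS1] at this; norm_num at this
  have hrest : ∀ i : Fin n, i ≠ j → x i = 0 := by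
    intro i hij
    have hsplit : S = |x j| + ∑ k ∈ Finset.univ.erase j, |x k| := by
      rw [hS, ← Finset.add_sum_erase _ _ (Finset.mem_univ j)]
    have hzero : ∑ k ∈ Finset.univ.erase j, |x k| = 0 := by
      rw [hS1, hj] at hsplit; linarith
    have := (Finset.sum_eq_zero_iff_of_nonneg (fun k _ => abs_nonneg (x k))).mp hzero i
      (Finset.mem_erase.mpr ⟨hij, Finset.mem_univ i⟩)
    exact abs_eq_zero.mp this
  have hxeq : x = EuclideanSpace.single j (x j) := by
    ext k
    rw [EuclideanSpace.single_apply]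
    split
    · next h => rw [h]
    · next h => exact hrest k h
  rcases abs_eq (by norm_num : (0:ℝ) ≤ 1) |>.mp hj with h | h
  · rw [hxeq, h]; exact base_mem j
  · rw [hxeq, h]
    have : EuclideanSpace.single j (-1 : ℝ) = -EuclideanSpace.single j (1:ℝ) := by
      ext k; simp [EuclideanSpace.single_apply]; split <;> simp
    rw [this]; exact neg_mem (base_mem j)

lemma key_dist {x y : EuclideanSpace ℝ (Fin n)}
    (hx : x ∈ convexHull ℝ (octVerts n)) (hy : y ∈ convexHull ℝ (octVerts n))
    (hd : dist x y = 2) : x ∈ octVerts n ∧ y = -x := by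
  have hx1 : ‖x‖ ≤ 1 := norm_le_of_hull hx
  have hy1 : ‖y‖ ≤ 1 := norm_le_of_hull hy
  have h2 : ‖x - y‖ = 2 := by rw [← dist_eq_norm]; exact hd
  have htri : ‖x - y‖ ≤ ‖x‖ + ‖y‖ := norm_sub_le x y
  have hxx : ‖x‖ = 1 := by linarith
  have hyy : ‖y‖ = 1 := by linarith
  have hinner : ⟪x, y⟫ = -1 := by
    have h := norm_sub_sq_real x y
    rw [h2, hxx, hyy] at h
    nlinarith
  have hzero : ‖x + y‖ ^ 2 = 0 := by
    rw [norm_add_sq_real, hxx, hyy, hinner]; ring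
  have hxy : y = -x := by
    have h0 : x + y = 0 := by
      have := pow_eq_zero_iff (n := 2) (by norm_num) |>.mp hzero
      exact norm_eq_zero.mp this
    exact eq_neg_of_add_eq_zero_right h0
  exact ⟨eq_single_of (sum_abs_le hx) hxx, hxy⟩

end OctAux

namespace OctAux2

open OctAux EuclideanSpace RealInnerProductSpace

variable {n : ℕ}

/-- An isometry preserving the hull maps vertices to vertices and is neg-equivariant
on vertices. -/
lemma symA {φ : EuclideanSpace ℝ (Fin n) ≃ᵢ EuclideanSpace ℝ (Fin n)}
    (hφ : ⇑φ '' convexHull ℝ (octVerts n) = convexHull ℝ (octVerts n))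
    {v : EuclideanSpace ℝ (Fin n)} (hv : v ∈ octVerts n) :
    φ v ∈ octVerts n ∧ φ (-v) = -(φ v) := by
  have hsub := subset_convexHull ℝ (octVerts n)
  have h1 : φ v ∈ convexHull ℝ (octVerts n) := hφ ▸ Set.mem_image_of_mem _ (hsub hv)
  have h2 : φ (-v) ∈ convexHull ℝ (octVerts n) :=
    hφ ▸ Set.mem_image_of_mem _ (hsub (neg_mem hv))
  have hd : dist (φ v) (φ (-v)) = 2 := by
    rw [φ.dist_eq, dist_eq_norm, sub_neg_eq_add, ← two_smul ℝ v, norm_smul,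
      norm_of_mem hv]
    norm_num
  obtain ⟨hmem, heq⟩ := key_dist h1 h2 hd
  exact ⟨hmem, heq⟩

lemma symm_image {φ : EuclideanSpace ℝ (Fin n) ≃ᵢ EuclideanSpace ℝ (Fin n)}
    {A : Set (EuclideanSpace ℝ (Fin n))} (hφ : ⇑φ '' A = A) : ⇑φ.symm '' A = A := by
  conv_lhs => rw [← hφ, ← Set.image_comp]
  simp

noncomputable def permOf (φ : EuclideanSpace ℝ (Fin n) ≃ᵢ EuclideanSpace ℝ (Fin n))
    (hφ : ⇑φ '' convexHull ℝ (octVerts n) = convexHull ℝ (octVerts n)) :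
    Equiv.Perm (octVerts n) where
  toFun v := ⟨φ v.1, (symA hφ v.2).1⟩
  invFun v := ⟨φ.symm v.1, (symA (symm_image hφ) v.2).1⟩
  left_inv v := Subtype.ext (φ.symm_apply_apply v.1)
  right_inv v := Subtype.ext (φ.apply_symm_apply v.1)

noncomputable def Fhom (n : ℕ) :
    (symGroup n (convexHull ℝ (octVerts n))) →* autGroup (octGraph n) where
  toFun φ := ⟨permOf φ.1 φ.2, by
    intro v w
    show (φ.1 v.1 ≠ φ.1 w.1 ∧ φ.1 w.1 ≠ -(φ.1 v.1)) ↔ (v.1 ≠ w.1 ∧ w.1 ≠ -v.1)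
    have hneg : φ.1 (-v.1) = -(φ.1 v.1) := (symA φ.2 v.2).2
    rw [← hneg]
    exact and_congr φ.1.injective.ne_iff φ.1.injective.ne_iff⟩
  map_one' := rfl
  map_mul' φ ψ := rfl

end OctAux2

namespace OctAux3

open OctAux OctAux2 EuclideanSpace RealInnerProductSpace

variable {n : ℕ}

lemma smul_single (c : ℝ) (j : Fin n) :
    EuclideanSpace.single j c = c • EuclideanSpace.single j (1:ℝ) := by
  ext k
  have : (c • EuclideanSpace.single j (1:ℝ)) k = c * (EuclideanSpace.single j (1:ℝ)) k := rfl
  rw [this]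
  simp [EuclideanSpace.single_apply]

lemma singles_inj {j j' : Fin n} {c c' : ℝ} (hc : c ≠ 0)
    (h : c • EuclideanSpace.single j (1:ℝ) = c' • EuclideanSpace.single j' 1) :
    j = j' ∧ c = c' := by
  have hj := congrFun (congrArg WithLp.ofLp h) j
  have hl : (c • EuclideanSpace.single j (1:ℝ)) j = c := by
    have : (c • EuclideanSpace.single j (1:ℝ)) j = c * (EuclideanSpace.single j (1:ℝ)) j := rfl
    rw [this]; simp
  have hr : ∀ k, (c' • EuclideanSpace.single j' (1:ℝ)) k = c' * (if k = j' then 1 else 0) := by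
    intro k
    have : (c' • EuclideanSpace.single j' (1:ℝ)) k = c' * (EuclideanSpace.single j' (1:ℝ)) k := rfl
    rw [this]; simp [EuclideanSpace.single_apply]
  rw [hl, hr] at hj
  by_cases hjj : j = j'
  · subst hjj
    simp at hj
    exact ⟨rfl, hj⟩
  · rw [if_neg hjj, mul_zero] at hj
    exact absurd hj hc

lemma F_injective (n : ℕ) (hn : 1 ≤ n) : Function.Injective (Fhom n) := by
  rw [injective_iff_map_eq_one]
  intro φ hφ
  have hfix : ∀ (v : EuclideanSpace ℝ (Fin n)) (hv : v ∈ octVerts n), φ.1 v = v := by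
    intro v hv
    have := congrArg (fun π : ↥(autGroup (octGraph n)) => ((π : Equiv.Perm (octVerts n)) ⟨v, hv⟩).1) hφ
    exact this
  set i0 : Fin n := ⟨0, hn⟩
  set e := EuclideanSpace.single i0 (1:ℝ) with he'
  have he : ‖e‖ = 1 := by simp [he']
  have ha : dist (φ.1 0) e = 1 := by
    calc dist (φ.1 0) e = dist (φ.1 0) (φ.1 e) := by rw [hfix e (base_mem i0)]
      _ = dist 0 e := φ.1.dist_eq 0 e
      _ = 1 := by rw [dist_zero_left, he]
  have hb : dist (φ.1 0) (-e) = 1 := by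
    calc dist (φ.1 0) (-e) = dist (φ.1 0) (φ.1 (-e)) := by
          rw [hfix (-e) (neg_mem (base_mem i0))]
      _ = dist 0 (-e) := φ.1.dist_eq 0 (-e)
      _ = 1 := by rw [dist_zero_left, norm_neg, he]
  have h1 : ‖φ.1 0 - e‖ ^ 2 = 1 := by rw [← dist_eq_norm, ha]; norm_num
  have h2 : ‖φ.1 0 + e‖ ^ 2 = 1 := by rw [← sub_neg_eq_add, ← dist_eq_norm, hb]; norm_num
  have hz : ‖φ.1 0‖ ^ 2 = 0 := by
    have hs := norm_sub_sq_real (φ.1 0) e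
    have hadd := norm_add_sq_real (φ.1 0) e
    rw [he] at hs hadd
    nlinarith
  have hz0 : φ.1 0 = 0 := by
    have := pow_eq_zero_iff (n := 2) (by norm_num) |>.mp hz
    exact norm_eq_zero.mp this
  set L := φ.1.toRealLinearIsometryEquivOfMapZero hz0 with hL'
  have hL : ⇑L = ⇑φ.1 := IsometryEquiv.coe_toRealLinearIsometryEquivOfMapZero φ.1 hz0
  have hLM : L.toLinearEquiv.toLinearMap = LinearMap.id := by
    apply Module.Basis.ext (EuclideanSpace.basisFun (Fin n) ℝ).toBasis
    intro i
    have hco : L.toLinearEquiv.toLinearMap ((EuclideanSpace.basisFun (Fin n) ℝ).toBasis i) =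
        L ((EuclideanSpace.basisFun (Fin n) ℝ).toBasis i) := rfl
    rw [hco, OrthonormalBasis.coe_toBasis, EuclideanSpace.basisFun_apply]
    rw [show (L (EuclideanSpace.single i 1)) = φ.1 (EuclideanSpace.single i 1) from
      congrFun hL _]
    rw [hfix _ (base_mem i)]
    rfl
  have hid : ∀ x, φ.1 x = x := by
    intro x
    have : L x = x := by
      have := congrFun (congrArg (fun (f : EuclideanSpace ℝ (Fin n) →ₗ[ℝ] EuclideanSpace ℝ (Fin n)) => ⇑f) hLM) x
      exact this
    rw [← congrFun hL x]
    exact this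
  exact Subtype.ext (IsometryEquiv.ext hid)

end OctAux3

namespace OctAux4

open OctAux OctAux2 OctAux3 EuclideanSpace

lemma F_surjective (n : ℕ) : Function.Surjective (Fhom n) := by
  classical
  intro π
  set e : ∀ _ : Fin n, ↥(octVerts n) := fun i => ⟨EuclideanSpace.single i 1, base_mem i⟩
    with he
  have hπ : ∀ v w, (octGraph n).Adj ((π : Equiv.Perm (octVerts n)) v)
      ((π : Equiv.Perm (octVerts n)) w) ↔ (octGraph n).Adj v w := π.2
  -- neg-equivariance of π
  have hneg : ∀ v : ↥(octVerts n),
      ((π : Equiv.Perm (octVerts n)) ⟨-v.1, neg_mem v.2⟩).1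
        = -((π : Equiv.Perm (octVerts n)) v).1 := by
    intro v
    have hv0 : v.1 ≠ 0 := by
      intro h
      have := norm_of_mem v.2
      rw [h] at this
      simp at this
    have hvne : v.1 ≠ -v.1 := by
      intro h
      apply hv0
      have h1 : v.1 + v.1 = 0 := by nth_rewrite 1 [h]; simp
      have h2 : (2:ℝ) • v.1 = 0 := by rw [two_smul]; exact h1
      rcases smul_eq_zero.mp h2 with h3 | h3
      · norm_num at h3
      · exact h3
    set w : ↥(octVerts n) := ⟨-v.1, neg_mem v.2⟩ with hw
    have hnadj : ¬ (octGraph n).Adj v w := by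
      rintro ⟨_, h2⟩
      exact h2 rfl
    have hnadj' : ¬ (octGraph n).Adj ((π : Equiv.Perm _) v) ((π : Equiv.Perm _) w) :=
      fun h => hnadj ((hπ v w).mp h)
    have hne : ((π : Equiv.Perm _) v).1 ≠ ((π : Equiv.Perm _) w).1 := by
      intro h
      have h2 := (π : Equiv.Perm (octVerts n)).injective (Subtype.ext h)
      exact hvne (congrArg Subtype.val h2)
    by_contra hcon
    exact hnadj' ⟨hne, hcon⟩
  -- extract the signed permutation
  have hch : ∀ i : Fin n, ∃ (j : Fin n) (c : ℝ), (c = 1 ∨ c = -1) ∧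
      ((π : Equiv.Perm (octVerts n)) (e i)).1 = c • EuclideanSpace.single j 1 := by
    intro i
    obtain ⟨j, c, hc, hx⟩ := mem_octVerts_iff.mp ((π : Equiv.Perm (octVerts n)) (e i)).2
    exact ⟨j, c, hc, hx⟩
  choose σ ε hp1 hp2 using hch
  have hε : ∀ i, ε i ≠ 0 := by
    intro i
    rcases hp1 i with h | h <;> rw [h] <;> norm_num
  have hσinj : Function.Injective σ := by
    intro i i' h
    by_cases hee : ε i = ε i'
    · have hval : ((π : Equiv.Perm _) (e i)).1 = ((π : Equiv.Perm _) (e i')).1 := by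
        rw [hp2 i, hp2 i', hee, h]
      have h2 := (π : Equiv.Perm (octVerts n)).injective (Subtype.ext hval)
      have h3 := congrArg Subtype.val h2
      have h4 : (1:ℝ) • EuclideanSpace.single i (1:ℝ) = (1:ℝ) • EuclideanSpace.single i' 1 := by
        simpa using h3
      exact (singles_inj one_ne_zero h4).1
    · have hovp : ε i' = -ε i := by
        rcases hp1 i with h1 | h1 <;> rcases hp1 i' with h2 | h2 <;>
          rw [h1, h2] <;> rw [h1, h2] at hee <;> norm_num at hee <;> norm_num
      have hval : ((π : Equiv.Perm _) (e i')).1 = -((π : Equiv.Perm _) (e i)).1 := by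
        rw [hp2 i, hp2 i', hovp, h, neg_smul]
      rw [← hneg (e i)] at hval
      have h2 := (π : Equiv.Perm (octVerts n)).injective (Subtype.ext hval)
      have h3 := congrArg Subtype.val h2
      have h4 : (1:ℝ) • EuclideanSpace.single i' (1:ℝ)
          = (-1:ℝ) • EuclideanSpace.single i 1 := by
        simpa using h3
      have := (singles_inj one_ne_zero h4).2
      norm_num at this
  set σE : Equiv.Perm (Fin n) := Equiv.ofBijective σ (Finite.injective_iff_bijective.mp hσinj)
    with hσE
  set flips : ∀ _ : Fin n, ℝ ≃ₗᵢ[ℝ] ℝ :=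
    fun i => if ε i = 1 then LinearIsometryEquiv.refl ℝ ℝ else LinearIsometryEquiv.neg ℝ
    with hflips
  set L : EuclideanSpace ℝ (Fin n) ≃ₗᵢ[ℝ] EuclideanSpace ℝ (Fin n) :=
    (LinearIsometryEquiv.piLpCongrRight 2 flips).trans
      (LinearIsometryEquiv.piLpCongrLeft 2 ℝ ℝ σE) with hLdef
  have hflipval : ∀ i, flips i (1:ℝ) = ε i := by
    intro i
    rcases hp1 i with h | h
    · simp only [hflips]
      rw [if_pos h, h]
      simp
    · have hne : ε i ≠ 1 := by rw [h]; norm_num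
      simp only [hflips]
      rw [if_neg hne, h]
      simp
  have hLsingle : ∀ i, L (EuclideanSpace.single i 1)
      = ε i • EuclideanSpace.single (σ i) 1 := by
    intro i
    have h1 : LinearIsometryEquiv.piLpCongrRight 2 flips (EuclideanSpace.single i 1)
        = EuclideanSpace.single i (ε i) := by
      have := LinearIsometryEquiv.piLpCongrRight_single (p := 2) flips i (1:ℝ)
      rw [hflipval i] at this
      exact this
    have h2 : LinearIsometryEquiv.piLpCongrLeft 2 ℝ ℝ σE (EuclideanSpace.single i (ε i))
        = EuclideanSpace.single (σ i) (ε i) := by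
      have := LinearIsometryEquiv.piLpCongrLeft_single (p := 2) (𝕜 := ℝ) (E := ℝ) σE i (ε i)
      exact this
    rw [hLdef]
    rw [LinearIsometryEquiv.trans_apply, h1, h2, smul_single]
  have hLv : ∀ v : ↥(octVerts n), L v.1 = ((π : Equiv.Perm (octVerts n)) v).1 := by
    intro v
    obtain ⟨j, c, hc, hx⟩ := mem_octVerts_iff.mp v.2
    rcases hc with rfl | rfl
    · have hv : v = e j := Subtype.ext (by rw [hx, one_smul])
      rw [hv]
      show L (EuclideanSpace.single j 1) = _
      rw [hLsingle j, ← hp2 j]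
    · have hv : v = ⟨-(e j).1, neg_mem (e j).2⟩ := Subtype.ext (by rw [hx]; simp; rfl)
      rw [hv, hneg (e j)]
      show L (-(EuclideanSpace.single j 1)) = _
      rw [map_neg, hLsingle j, ← hp2 j]
  have hLVerts : ⇑L '' octVerts n = octVerts n := by
    apply Set.ext
    intro w
    constructor
    · rintro ⟨u, hu, rfl⟩
      rw [hLv ⟨u, hu⟩]
      exact ((π : Equiv.Perm (octVerts n)) ⟨u, hu⟩).2
    · intro hw
      refine ⟨((π : Equiv.Perm (octVerts n)).symm ⟨w, hw⟩).1,
        ((π : Equiv.Perm (octVerts n)).symm ⟨w, hw⟩).2, ?_⟩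
      rw [hLv]
      simp
  have hLhull : ⇑L.toIsometryEquiv '' convexHull ℝ (octVerts n) = convexHull ℝ (octVerts n) := by
    have hcoe : ⇑L.toIsometryEquiv = ⇑L := rfl
    rw [hcoe]
    have h := (L.toLinearEquiv.toLinearMap).image_convexHull (octVerts n)
    have hcoe2 : ⇑L.toLinearEquiv.toLinearMap = ⇑L := rfl
    rw [hcoe2] at h
    rw [h, hLVerts]
  refine ⟨⟨L.toIsometryEquiv, hLhull⟩, ?_⟩
  apply Subtype.ext
  apply Equiv.ext
  intro v
  apply Subtype.ext
  show L.toIsometryEquiv v.1 = ((π : Equiv.Perm (octVerts n)) v).1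
  exact hLv v

end OctAux4


/-- The group of symmetries of the regular hyperoctahedron `◇ⁿ = conv{±e₁,…,±eₙ}`
is isomorphic to the automorphism group of its graph. -/
theorem symGroup_hyperoctahedron_iso_autGroup_octGraph (n : ℕ) (hn : 1 ≤ n) :
    Nonempty ((symGroup n (convexHull ℝ (octVerts n))) ≃* autGroup (octGraph n)) := by
  exact ⟨MulEquiv.ofBijective (OctAux2.Fhom n) ⟨OctAux3.F_injective n hn, OctAux4.F_surjective n⟩⟩
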